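/- Let K > 0, let α > 0 satisfy α(1 + πK/2) < π/4, and let ℓ be a ray from the origin in ℝ^d with unit direction u. Let B(x, r) be a closed ball with r ≤ dist(x, ℓ), whose center x lies in the cone C(u, α) = {y ≠ 0 : ⟨u, y⟩ ≥ ‖y‖ cos α}. Then the ball B(x, K·r) is contained in the cone C(u, π/4). -/

import Mathlib

open scoped RealInnerProductSpace
open Real

private lemma le_of_sq_le_sq'' {a b : ℝ} (ha : 0 ≤ a) (hb : 0 ≤ b) (h : a ^ 2 ≤ b ^ 2) :
    a ≤ b := by nlinarith

private lemma eq_of_sq_eq_sq'' {a b : ℝ} (ha : 0 ≤ a) (hb : 0 ≤ b) (h : a ^ 2 = b ^ 2) :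
    a = b :=
  le_antisymm (le_of_sq_le_sq'' ha hb h.le) (le_of_sq_le_sq'' hb ha h.ge)

private lemma div_ineq_aux {s nx np e KA : ℝ} (h : s * (nx * np) ≤ np * e)
    (he : e ≤ KA * nx) (hnp : 0 < np) (hnx : 0 < nx) : s ≤ KA := by
  nlinarith [mul_pos hnx hnp, mul_le_mul_of_nonneg_left he hnp.le]

private lemma key_quad_aux {a b t e : ℝ} (he : e ^ 2 = b ^ 2 - 2 * t + a ^ 2) :
    a ^ 2 * b ^ 2 - t * t ≤ (b * e) ^ 2 := by nlinarith [sq_nonneg (t - b ^ 2)]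

private lemma small_aux1 {K α pi' : ℝ} (hK : 0 < K) (hα : 0 < α) (hπ : 0 < pi')
    (hsmall : α * (1 + pi' * K / 2) < pi' / 4) : α < pi' / 4 := by
  nlinarith [mul_pos hα (mul_pos hπ hK)]

private lemma small_aux2 {K α pi' : ℝ} (hK : 0 < K) (hα : 0 < α) (hπ : 0 < pi')
    (hsmall : α * (1 + pi' * K / 2) < pi' / 4) : K * α < 1 / 2 := by
  nlinarith [mul_pos hα (mul_pos hπ hK)]

set_option maxHeartbeats 1600000 in
/-- Cone containment: if `B(x, r)` misses the ray `ℓ = {t • u : t ≥ 0}`, its center lies in the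
cone `C(u, α)` and `α(1 + πK/2) < π/4`, then `B(x, K·r)` is contained in the cone `C(u, π/4)`. -/
theorem ball_in_quarter_cone (d : ℕ) (K α : ℝ) (hK : 0 < K) (hα : 0 < α)
    (hsmall : α * (1 + π * K / 2) < π / 4)
    (u x : EuclideanSpace ℝ (Fin d)) (hu : ‖u‖ = 1)
    (r : ℝ) (hr : 0 ≤ r)
    (hx0 : x ≠ 0) (hxcone : ‖x‖ * Real.cos α ≤ ⟪u, x⟫)
    (hdist : r ≤ Metric.infDist x {y | ∃ t : ℝ, 0 ≤ t ∧ y = t • u}) :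
    ∀ p ∈ Metric.closedBall x (K * r),
      p ≠ 0 ∧ ‖p‖ * Real.cos (π / 4) ≤ ⟪u, p⟫ := by
  have hπ : (0:ℝ) < π := Real.pi_pos
  have hn : (0:ℝ) < ‖x‖ := norm_pos_iff.mpr hx0
  have hα4 : α < π / 4 := small_aux1 hK hα hπ hsmall
  have hKα : K * α < 1 / 2 := small_aux2 hK hα hπ hsmall
  have hcosα : 0 < Real.cos α := Real.cos_pos_of_mem_Ioo ⟨by linarith, by linarith⟩
  have hsinα0 : 0 ≤ Real.sin α := Real.sin_nonneg_of_nonneg_of_le_pi hα.le (by linarith)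
  have hsinαα : Real.sin α ≤ α := Real.sin_le hα.le
  have hs2 : Real.sin α ^ 2 = 1 - Real.cos α ^ 2 := by
    have := Real.sin_sq_add_cos_sq α; linarith
  have hc : ‖x‖ * Real.cos α ≤ ⟪u, x⟫ := hxcone
  have hc0 : 0 < ⟪u, x⟫ := lt_of_lt_of_le (by positivity) hc
  -- Step B : r ≤ ‖x‖ * sin α
  have hrB : r ≤ ‖x‖ * Real.sin α := by
    have hmem : (⟪u, x⟫ : ℝ) • u ∈ {y : EuclideanSpace ℝ (Fin d) | ∃ t : ℝ, 0 ≤ t ∧ y = t • u} :=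
      ⟨⟪u, x⟫, hc0.le, rfl⟩
    have h1 : Metric.infDist x {y : EuclideanSpace ℝ (Fin d) | ∃ t : ℝ, 0 ≤ t ∧ y = t • u}
        ≤ ‖x - (⟪u, x⟫ : ℝ) • u‖ := by
      simpa [dist_eq_norm] using Metric.infDist_le_dist_of_mem hmem
    have h2 : r ≤ ‖x - (⟪u, x⟫ : ℝ) • u‖ := hdist.trans h1
    have e1 : ‖x - (⟪u, x⟫ : ℝ) • u‖ ^ 2
        = ‖x‖ ^ 2 - 2 * ⟪x, (⟪u, x⟫ : ℝ) • u⟫ + ‖(⟪u, x⟫ : ℝ) • u‖ ^ 2 :=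
      norm_sub_sq_real x ((⟪u, x⟫ : ℝ) • u)
    have e2 : ⟪x, (⟪u, x⟫ : ℝ) • u⟫ = ⟪u, x⟫ * ⟪x, u⟫ := real_inner_smul_right x u ⟪u, x⟫
    have e3 : ⟪x, u⟫ = ⟪u, x⟫ := real_inner_comm u x
    have e4 : ‖(⟪u, x⟫ : ℝ) • u‖ ^ 2 = ⟪u, x⟫ ^ 2 := by
      rw [norm_smul, mul_pow, Real.norm_eq_abs, sq_abs, hu, one_pow, mul_one]
    have h3 : ‖x - (⟪u, x⟫ : ℝ) • u‖ ^ 2 = ‖x‖ ^ 2 - ⟪u, x⟫ ^ 2 := by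
      rw [e1, e2, e3, e4]; ring
    have hc2 : (‖x‖ * Real.cos α) ^ 2 ≤ ⟪u, x⟫ ^ 2 :=
      pow_le_pow_left₀ (by positivity) hc 2
    have hr2 : r ^ 2 ≤ ‖x‖ ^ 2 - ⟪u, x⟫ ^ 2 := by
      rw [← h3]; exact pow_le_pow_left₀ hr h2 2
    refine le_of_sq_le_sq'' hr (by positivity) ?_
    have hexp : (‖x‖ * Real.sin α) ^ 2 = ‖x‖ ^ 2 - (‖x‖ * Real.cos α) ^ 2 := by
      rw [mul_pow, mul_pow, hs2]; ring
    linarith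
  intro p hp
  have hpx : ‖p - x‖ ≤ K * r := by
    simpa [dist_eq_norm] using Metric.mem_closedBall.mp hp
  have hpx0 : (0:ℝ) ≤ ‖p - x‖ := norm_nonneg _
  have hpxs : ‖p - x‖ ≤ K * α * ‖x‖ := by
    calc ‖p - x‖ ≤ K * r := hpx
      _ ≤ K * (‖x‖ * Real.sin α) := mul_le_mul_of_nonneg_left hrB hK.le
      _ ≤ K * (‖x‖ * α) := mul_le_mul_of_nonneg_left
          (mul_le_mul_of_nonneg_left hsinαα hn.le) hK.le
      _ = K * α * ‖x‖ := by ring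
  have hpxhalf : ‖p - x‖ ≤ ‖x‖ / 2 := by
    calc ‖p - x‖ ≤ K * α * ‖x‖ := hpxs
      _ ≤ 1 / 2 * ‖x‖ := mul_le_mul_of_nonneg_right hKα.le hn.le
      _ = ‖x‖ / 2 := by ring
  have hm : ‖x‖ / 2 ≤ ‖p‖ := by
    have h : ‖x‖ - ‖p‖ ≤ ‖x - p‖ := by simpa using norm_sub_norm_le x p
    rw [show x - p = -(p - x) by abel, norm_neg] at h
    linarith
  have hm0 : 0 < ‖p‖ := by linarith
  have hp0 : p ≠ 0 := norm_pos_iff.mp hm0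
  refine ⟨hp0, ?_⟩
  have hn2 : (0:ℝ) < ‖x‖ ^ 2 := by positivity
  -- Step D : inner x p positive
  have hb0 : 0 < ⟪x, p⟫ := by
    have exp1 : ⟪x, p - x⟫ = ⟪x, p⟫ - ⟪x, x⟫ := inner_sub_right x p x
    have hxx' : ⟪x, x⟫ = ‖x‖ ^ 2 := real_inner_self_eq_norm_sq x
    have hcs : -(‖x‖ * ‖p - x‖) ≤ ⟪x, p - x⟫ :=
      (abs_le.mp (abs_real_inner_le_norm x (p - x))).1
    have h5 : ‖x‖ * ‖p - x‖ ≤ ‖x‖ * (‖x‖ / 2) := mul_le_mul_of_nonneg_left hpxhalf hn.le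
    have h6 : ‖x‖ * (‖x‖ / 2) = ‖x‖ ^ 2 / 2 := by ring
    linarith
  -- angle γ between x and p
  set γ := InnerProductGeometry.angle x p with hγdef
  have hγ0 : 0 ≤ γ := InnerProductGeometry.angle_nonneg x p
  have hγπ : γ ≤ π := InnerProductGeometry.angle_le_pi x p
  have hcosγ : Real.cos γ * (‖x‖ * ‖p‖) = ⟪x, p⟫ :=
    InnerProductGeometry.cos_angle_mul_norm_mul_norm x p
  have hcosγ0 : 0 < Real.cos γ := by
    have hcos' : Real.cos γ = ⟪x, p⟫ / (‖x‖ * ‖p‖) := InnerProductGeometry.cos_angle x p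
    rw [hcos']
    exact div_pos hb0 (by positivity)
  have hγlt : γ < π / 2 := by
    by_contra h
    push_neg at h
    have : Real.cos γ ≤ 0 := Real.cos_nonpos_of_pi_div_two_le_of_le h (by linarith)
    linarith
  have hsinγ : Real.sin γ * (‖x‖ * ‖p‖) = √(⟪x, x⟫ * ⟪p, p⟫ - ⟪x, p⟫ * ⟪x, p⟫) :=
    InnerProductGeometry.sin_angle_mul_norm_mul_norm x p
  have hsinγ0 : 0 ≤ Real.sin γ := Real.sin_nonneg_of_nonneg_of_le_pi hγ0 hγπ
  have hxx : ⟪x, x⟫ = ‖x‖ ^ 2 := real_inner_self_eq_norm_sq x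
  have hpp : ⟪p, p⟫ = ‖p‖ ^ 2 := real_inner_self_eq_norm_sq p
  -- sin γ ≤ K * α
  have hkey : Real.sin γ * (‖x‖ * ‖p‖) ≤ ‖p‖ * ‖p - x‖ := by
    rw [hsinγ]
    have e1 : ‖p - x‖ ^ 2 = ‖p‖ ^ 2 - 2 * ⟪p, x⟫ + ‖x‖ ^ 2 := norm_sub_sq_real p x
    have e2 : ⟪p, x⟫ = ⟪x, p⟫ := real_inner_comm x p
    have h1 : ‖p - x‖ ^ 2 = ‖p‖ ^ 2 - 2 * ⟪x, p⟫ + ‖x‖ ^ 2 := by rw [e1, e2]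
    have hsq : ⟪x, x⟫ * ⟪p, p⟫ - ⟪x, p⟫ * ⟪x, p⟫ ≤ (‖p‖ * ‖p - x‖) ^ 2 := by
      rw [hxx, hpp]
      exact key_quad_aux h1
    calc √(⟪x, x⟫ * ⟪p, p⟫ - ⟪x, p⟫ * ⟪x, p⟫) ≤ √((‖p‖ * ‖p - x‖) ^ 2) :=
          Real.sqrt_le_sqrt hsq
      _ = ‖p‖ * ‖p - x‖ := Real.sqrt_sq (by positivity)
  have hsinγle : Real.sin γ ≤ K * α := div_ineq_aux hkey hpxs hm0 hn
  -- Jordan : γ ≤ (π/2) sin γ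
  have hγle : γ ≤ π / 2 * (K * α) := by
    have hj : 2 / π * γ ≤ Real.sin γ := Real.mul_le_sin hγ0 hγlt.le
    have h2 : 2 / π * γ ≤ K * α := hj.trans hsinγle
    calc γ = π / 2 * (2 / π * γ) := by field_simp
      _ ≤ π / 2 * (K * α) := mul_le_mul_of_nonneg_left h2 (by positivity)
  have hsum : α + γ < π / 4 := by nlinarith [hγle, hsmall]
  -- orthogonal decomposition along x
  set c : ℝ := ⟪u, x⟫ / ‖x‖ ^ 2 with hcdef
  set b : ℝ := ⟪x, p⟫ / ‖x‖ ^ 2 with hbdef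
  have hcval : c * ‖x‖ ^ 2 = ⟪u, x⟫ := by rw [hcdef]; field_simp
  have hbval : b * ‖x‖ ^ 2 = ⟪x, p⟫ := by rw [hbdef]; field_simp
  have hbn : b * ‖x‖ = Real.cos γ * ‖p‖ := by
    have h3 : b * ‖x‖ * ‖x‖ = Real.cos γ * ‖p‖ * ‖x‖ := by
      calc b * ‖x‖ * ‖x‖ = b * ‖x‖ ^ 2 := by ring
        _ = ⟪x, p⟫ := hbval
        _ = Real.cos γ * (‖x‖ * ‖p‖) := hcosγ.symm
        _ = Real.cos γ * ‖p‖ * ‖x‖ := by ring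
    exact mul_right_cancel₀ hn.ne' h3
  have hcx : Real.cos α ≤ c * ‖x‖ := by
    have h3 : Real.cos α * ‖x‖ ≤ c * ‖x‖ * ‖x‖ := by
      calc Real.cos α * ‖x‖ = ‖x‖ * Real.cos α := by ring
        _ ≤ ⟪u, x⟫ := hc
        _ = c * ‖x‖ ^ 2 := hcval.symm
        _ = c * ‖x‖ * ‖x‖ := by ring
    exact le_of_mul_le_mul_right h3 hn
  -- decomposition identity
  have hdecomp : ⟪u, p⟫ = ⟪u - c • x, p - b • x⟫ + c * b * ‖x‖ ^ 2 := by
    have f1 : ⟪u - c • x, p - b • x⟫ = ⟪u, p - b • x⟫ - ⟪c • x, p - b • x⟫ :=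
      inner_sub_left u (c • x) (p - b • x)
    have f2 : ⟪u, p - b • x⟫ = ⟪u, p⟫ - ⟪u, b • x⟫ := inner_sub_right u p (b • x)
    have f3 : ⟪u, b • x⟫ = b * ⟪u, x⟫ := real_inner_smul_right u x b
    have f4 : ⟪c • x, p - b • x⟫ = c * ⟪x, p - b • x⟫ := real_inner_smul_left x (p - b • x) c
    have f5 : ⟪x, p - b • x⟫ = ⟪x, p⟫ - ⟪x, b • x⟫ := inner_sub_right x p (b • x)
    have f6 : ⟪x, b • x⟫ = b * ⟪x, x⟫ := real_inner_smul_right x x b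
    rw [f1, f2, f3, f4, f5, f6, hxx]
    linear_combination (-b) * hcval + (-c) * hbval
  -- norms of the orthogonal parts
  have hnu' : ‖u - c • x‖ ^ 2 = 1 - (c * ‖x‖) ^ 2 := by
    have e1 : ‖u - c • x‖ ^ 2 = ‖u‖ ^ 2 - 2 * ⟪u, c • x⟫ + ‖c • x‖ ^ 2 :=
      norm_sub_sq_real u (c • x)
    have e2 : ⟪u, c • x⟫ = c * ⟪u, x⟫ := real_inner_smul_right u x c
    have e3 : ‖c • x‖ ^ 2 = c ^ 2 * ‖x‖ ^ 2 := by
      rw [norm_smul, mul_pow, Real.norm_eq_abs, sq_abs]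
    have e5 : ‖u‖ ^ 2 = 1 := by rw [hu]; norm_num
    rw [e1, e2, e3, e5]
    linear_combination (2 * c) * hcval
  have hnp' : ‖p - b • x‖ ^ 2 = ‖p‖ ^ 2 - (b * ‖x‖) ^ 2 := by
    have e1 : ‖p - b • x‖ ^ 2 = ‖p‖ ^ 2 - 2 * ⟪p, b • x⟫ + ‖b • x‖ ^ 2 :=
      norm_sub_sq_real p (b • x)
    have e2 : ⟪p, b • x⟫ = b * ⟪p, x⟫ := real_inner_smul_right p x b
    have e2' : ⟪p, x⟫ = ⟪x, p⟫ := real_inner_comm x p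
    have e3 : ‖b • x‖ ^ 2 = b ^ 2 * ‖x‖ ^ 2 := by
      rw [norm_smul, mul_pow, Real.norm_eq_abs, sq_abs]
    rw [e1, e2, e2', e3]
    linear_combination (2 * b) * hbval
  have hnu'le : ‖u - c • x‖ ≤ Real.sin α := by
    refine le_of_sq_le_sq'' (norm_nonneg _) hsinα0 ?_
    have hc2 : Real.cos α ^ 2 ≤ (c * ‖x‖) ^ 2 := pow_le_pow_left₀ hcosα.le hcx 2
    rw [hnu', hs2]
    linarith
  have hnp'eq : ‖p - b • x‖ = ‖p‖ * Real.sin γ := by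
    refine eq_of_sq_eq_sq'' (norm_nonneg _) (mul_nonneg hm0.le hsinγ0) ?_
    have hsin2 : Real.sin γ ^ 2 = 1 - Real.cos γ ^ 2 := by
      have := Real.sin_sq_add_cos_sq γ; linarith
    have hb2 : (b * ‖x‖) ^ 2 = (Real.cos γ * ‖p‖) ^ 2 := by rw [hbn]
    rw [hnp', hb2, mul_pow, mul_pow, hsin2]
    ring
  -- combine
  have hCS : -(‖u - c • x‖ * ‖p - b • x‖) ≤ ⟪u - c • x, p - b • x⟫ :=
    (abs_le.mp (abs_real_inner_le_norm (u - c • x) (p - b • x))).1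
  have hbn0 : 0 < Real.cos γ * ‖p‖ := by positivity
  have hcb : ‖p‖ * (Real.cos α * Real.cos γ) ≤ c * b * ‖x‖ ^ 2 := by
    calc ‖p‖ * (Real.cos α * Real.cos γ) = Real.cos α * (Real.cos γ * ‖p‖) := by ring
      _ ≤ (c * ‖x‖) * (Real.cos γ * ‖p‖) := mul_le_mul_of_nonneg_right hcx hbn0.le
      _ = (c * ‖x‖) * (b * ‖x‖) := by rw [hbn]
      _ = c * b * ‖x‖ ^ 2 := by ring
  have hfinal : ‖p‖ * Real.cos (α + γ) ≤ ⟪u, p⟫ := by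
    rw [hdecomp, Real.cos_add]
    have h1 : ‖u - c • x‖ * ‖p - b • x‖ ≤ Real.sin α * (‖p‖ * Real.sin γ) := by
      rw [hnp'eq]
      exact mul_le_mul_of_nonneg_right hnu'le (mul_nonneg hm0.le hsinγ0)
    have h2 : ‖p‖ * (Real.cos α * Real.cos γ - Real.sin α * Real.sin γ)
        = ‖p‖ * (Real.cos α * Real.cos γ) - Real.sin α * (‖p‖ * Real.sin γ) := by ring
    linarith
  have hmono : Real.cos (π / 4) ≤ Real.cos (α + γ) :=
    Real.cos_le_cos_of_nonneg_of_le_pi (by linarith) (by linarith) (by linarith)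
  calc ‖p‖ * Real.cos (π / 4) ≤ ‖p‖ * Real.cos (α + γ) :=
        mul_le_mul_of_nonneg_left hmono hm0.le
    _ ≤ ⟪u, p⟫ := hfinal
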